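/- The atom mass a = (Xlo_2*Xhi_1 - Xhi_2*Xlo_1)/(Xlo_1*(Xlo_2 - Xhi_2)) satisfies 0 <= a < 1, and the density g_1(x) = R*Xhi_1*Xlo_2/(Xlo_1*(Xlo_2 - Xhi_2)*x^2) integrates to 1 - a over [L, R], where L = R*Xhi_1/Xlo_1; hence firm 1's equilibrium mixed strategy mu_1 is a probability measure on [L, R]. -/

import Mathlib

open MeasureTheory

/-- The atom mass `a = (Xlo₂*Xhi₁ - Xhi₂*Xlo₁)/(Xlo₁*(Xlo₂ - Xhi₂))` satisfies
`0 ≤ a < 1`, and the density `g₁(x) = R*Xhi₁*Xlo₂/(Xlo₁*(Xlo₂ - Xhi₂)*x²)`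
integrates to `1 - a` over `[L, R]`, where `L = R*Xhi₁/Xlo₁`; hence firm 1's
equilibrium mixed strategy `μ₁` (density `g₁` on `[L, R]` plus an atom of mass
`a` at `R`) is a probability measure on `[L, R]`. -/
theorem firm_one_strategy_is_probability
    (R Xlo₁ Xlo₂ Xhi₁ Xhi₂ : ℝ) (hR : 0 < R)
    (h12 : Xlo₂ ≤ Xlo₁) (hlo2 : 0 < Xlo₂)
    (hhi1 : 0 < Xhi₁) (h1 : Xhi₁ < Xlo₁)
    (hhi2 : 0 < Xhi₂) (h2 : Xhi₂ < Xlo₂)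
    (hhi12 : Xhi₂ ≤ Xhi₁) (hcross : Xhi₂ * Xlo₁ ≤ Xhi₁ * Xlo₂)
    (L a : ℝ) (hL : L = R * Xhi₁ / Xlo₁)
    (ha : a = (Xlo₂ * Xhi₁ - Xhi₂ * Xlo₁) / (Xlo₁ * (Xlo₂ - Xhi₂))) :
    0 ≤ a ∧ a < 1 ∧
      (∫ x in L..R, R * Xhi₁ * Xlo₂ / (Xlo₁ * (Xlo₂ - Xhi₂) * x ^ 2)) = 1 - a ∧
      IsProbabilityMeasure
        (((volume.restrict (Set.Icc L R)).withDensity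
            fun x => ENNReal.ofReal (R * Xhi₁ * Xlo₂ / (Xlo₁ * (Xlo₂ - Xhi₂) * x ^ 2)))
          + ENNReal.ofReal a • Measure.dirac R) := by
  have hlo1 : 0 < Xlo₁ := lt_trans hhi1 h1
  have hd : 0 < Xlo₂ - Xhi₂ := sub_pos.2 h2
  have hden : 0 < Xlo₁ * (Xlo₂ - Xhi₂) := mul_pos hlo1 hd
  have hL0 : 0 < L := by rw [hL]; positivity
  have hLR : L < R := by
    rw [hL, div_lt_iff₀ hlo1]; nlinarith
  have ha0 : 0 ≤ a := by
    rw [ha]; apply div_nonneg _ hden.le; nlinarith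
  have ha1 : a < 1 := by
    rw [ha, div_lt_one hden]; nlinarith
  have hfun : ∀ x : ℝ, R * Xhi₁ * Xlo₂ / (Xlo₁ * (Xlo₂ - Xhi₂) * x ^ 2)
      = (R * Xhi₁ * Xlo₂ / (Xlo₁ * (Xlo₂ - Xhi₂))) * x ^ (-2 : ℤ) := by
    intro x
    rw [div_mul_eq_div_div, zpow_neg, div_eq_mul_inv]
    norm_num
  have hint : (∫ x in L..R, R * Xhi₁ * Xlo₂ / (Xlo₁ * (Xlo₂ - Xhi₂) * x ^ 2)) = 1 - a := by
    simp only [hfun]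
    rw [intervalIntegral.integral_const_mul, integral_zpow (by
      right
      constructor
      · decide
      · rw [Set.uIcc_of_le hLR.le]
        intro h
        exact absurd h.1 (not_le.2 hL0))]
    rw [ha, hL]
    simp only [show (-2:ℤ)+1 = -1 from rfl, zpow_neg, zpow_one]
    have hR' : R ≠ 0 := ne_of_gt hR
    have h1' : Xlo₁ ≠ 0 := ne_of_gt hlo1
    have hh1' : Xhi₁ ≠ 0 := ne_of_gt hhi1
    have hd' : Xlo₂ - Xhi₂ ≠ 0 := ne_of_gt hd
    field_simp
    ring
  refine ⟨ha0, ha1, hint, ?_⟩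
  set g : ℝ → ℝ := fun x => R * Xhi₁ * Xlo₂ / (Xlo₁ * (Xlo₂ - Xhi₂) * x ^ 2) with hg
  have hcont : ContinuousOn g (Set.Icc L R) := by
    apply ContinuousOn.div continuousOn_const
    · fun_prop
    · intro x hx
      have : 0 < x := lt_of_lt_of_le hL0 hx.1
      positivity
  have hintg : IntegrableOn g (Set.Icc L R) volume := hcont.integrableOn_Icc
  have hnn : 0 ≤ᵐ[volume.restrict (Set.Icc L R)] g := by
    refine Filter.Eventually.of_forall fun x => ?_
    have : 0 ≤ x ^ 2 := sq_nonneg x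
    positivity
  have hlint : (∫⁻ x, ENNReal.ofReal (g x) ∂(volume.restrict (Set.Icc L R)))
      = ENNReal.ofReal (1 - a) := by
    rw [← ofReal_integral_eq_lintegral_ofReal hintg hnn]
    congr 1
    rw [← hint, intervalIntegral.integral_of_le hLR.le,
      ← MeasureTheory.integral_Icc_eq_integral_Ioc]
  constructor
  rw [Measure.add_apply, Measure.smul_apply, Measure.dirac_apply' _ MeasurableSet.univ,
    withDensity_apply _ MeasurableSet.univ, Measure.restrict_univ]
  simp only [Set.indicator_univ, Pi.one_apply, smul_eq_mul, mul_one]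
  rw [hlint, ← ENNReal.ofReal_add (by linarith) ha0]
  norm_num
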